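/- Let p ∈ ℂ[x₁,…,x_m] be a polynomial of total degree D ≥ 1 with leading homogeneous part p̂, and suppose that the set { x ∈ ℂ^m : p̂(x) = x₂ = ⋯ = x_m = 0 } consists only of the origin. Fix an integer j ≥ 1 and define u_j(x) := max{ (1/D)·log|p(x)|, log(|x₂|/j), …, log(|x_m|/j), −log j }. Then there exist constants c ≤ C such that log⁺‖x‖ + c ≤ u_j(x) ≤ log⁺‖x‖ + C for all x ∈ ℂ^m; that is, u_j belongs to the class 𝓛⁺(ℂ^m). -/

import Mathlib

open MvPolynomial

/-- The Euclidean norm of a vector in `ℂ^ι`. -/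
noncomputable def eucNorm {ι : Type*} [Fintype ι] (x : ι → ℂ) : ℝ :=
  Real.sqrt (∑ i, ‖x i‖ ^ 2)

/-- `log⁺ t = max (log t) 0`. -/
noncomputable def logPlus (t : ℝ) : ℝ := max (Real.log t) 0

/-- The function `u_j(x) = max{ (1/D)·log|p(x)|, log(|x₂|/j), …, log(|x_m|/j), −log j }`
(the maximum of a finite nonempty collection, expressed as a supremum). -/
noncomputable def uj (m : ℕ) (p : MvPolynomial (Fin m) ℂ) (D j : ℕ)
    (x : Fin m → ℂ) : ℝ :=
  sSup (insert ((1 / (D : ℝ)) * Real.log (‖eval x p‖))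
    (insert (-Real.log (j : ℝ))
      {t : ℝ | ∃ i : Fin m, (i : ℕ) ≠ 0 ∧ t = Real.log (‖x i‖ / (j : ℝ))}))

/- ### Auxiliary lemmas -/

lemma eucNorm_eq_norm {m : ℕ} (x : Fin m → ℂ) :
    eucNorm x = ‖WithLp.toLp 2 x‖ := by
  rw [EuclideanSpace.norm_eq]
  simp [eucNorm]

lemma abs_apply_le_eucNorm {m : ℕ} (x : Fin m → ℂ) (i : Fin m) :
    ‖x i‖ ≤ eucNorm x := by
  have h : ‖x i‖ = Real.sqrt (‖x i‖ ^ 2) :=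
    (Real.sqrt_sq (norm_nonneg _)).symm
  rw [h, eucNorm]
  apply Real.sqrt_le_sqrt
  exact Finset.single_le_sum (f := fun j => ‖x j‖ ^ 2)
    (fun j _ => sq_nonneg _) (Finset.mem_univ i)

lemma eucNorm_nonneg {m : ℕ} (x : Fin m → ℂ) : 0 ≤ eucNorm x := Real.sqrt_nonneg _

lemma eucNorm_smul {m : ℕ} (c : ℂ) (x : Fin m → ℂ) :
    eucNorm (c • x) = ‖c‖ * eucNorm x := by
  simp only [eucNorm, Pi.smul_apply, smul_eq_mul, norm_mul, mul_pow, ← Finset.mul_sum]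
  rw [Real.sqrt_mul (sq_nonneg _), Real.sqrt_sq (norm_nonneg _)]

lemma logPlus_eq_log_max {r : ℝ} (hr : 0 ≤ r) : logPlus r = Real.log (max 1 r) := by
  rcases le_total 1 r with h | h
  · rw [max_eq_right h, logPlus, max_eq_left (Real.log_nonneg h)]
  · rw [max_eq_left h, Real.log_one, logPlus, max_eq_right (Real.log_nonpos hr h)]

lemma log_le_log_max {a b : ℝ} (h0 : 0 ≤ a) (hab : a ≤ b) (hb : 1 ≤ b) :
    Real.log a ≤ Real.log b := by
  rcases eq_or_lt_of_le h0 with h | h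
  · rw [← h, Real.log_zero]; exact Real.log_nonneg hb
  · exact Real.log_le_log h hab

lemma homog_eval_smul {m n : ℕ} {f : MvPolynomial (Fin m) ℂ} (hf : f.IsHomogeneous n)
    (c : ℂ) (x : Fin m → ℂ) : eval (c • x) f = c ^ n * eval x f := by
  rw [eval_eq', eval_eq', Finset.mul_sum]
  refine Finset.sum_congr rfl fun d hd => ?_
  have hw : (Finsupp.weight 1) d = n := hf (mem_support_iff.mp hd)
  have hdeg : ∑ i, d i = n := by
    rw [← hw, ← Finsupp.degree_eq_sum, Finsupp.degree_eq_weight_one]; rfl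
  have h : ∏ i, (c • x) i ^ d i = c ^ n * ∏ i, x i ^ d i := by
    simp only [Pi.smul_apply, smul_eq_mul, mul_pow]
    rw [Finset.prod_mul_distrib, Finset.prod_pow_eq_pow_sum, hdeg]
  rw [h]; ring

lemma tail_degree {m D : ℕ} (p : MvPolynomial (Fin m) ℂ) (hdeg : p.totalDegree = D)
    (hD : 1 ≤ D) : (p - homogeneousComponent D p).totalDegree ≤ D - 1 := by
  rw [totalDegree]
  apply Finset.sup_le
  intro d hd
  have hne : coeff d (p - homogeneousComponent D p) ≠ 0 := mem_support_iff.mp hd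
  rw [coeff_sub, coeff_homogeneousComponent] at hne
  by_cases h : d.degree = D
  · simp [h] at hne
  · rw [if_neg h, sub_zero] at hne
    have h1 : (d.sum fun _ e => e) ≤ D := hdeg ▸ le_totalDegree (mem_support_iff.mpr hne)
    have h2 : (d.sum fun _ e => e) = d.degree := rfl
    omega

lemma eval_bound {m : ℕ} (f : MvPolynomial (Fin m) ℂ) :
    ∃ C : ℝ, 1 ≤ C ∧ ∀ x : Fin m → ℂ,
      ‖eval x f‖ ≤ C * max 1 (eucNorm x) ^ f.totalDegree := by
  refine ⟨max 1 (∑ d ∈ f.support, ‖coeff d f‖), le_max_left _ _, fun x => ?_⟩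
  set M := max 1 (eucNorm x) with hMdef
  have hM1 : (1:ℝ) ≤ M := le_max_left _ _
  have hM0 : (0:ℝ) ≤ M := zero_le_one.trans hM1
  rw [eval_eq']
  calc ‖∑ d ∈ f.support, coeff d f * ∏ i, x i ^ d i‖
      ≤ ∑ d ∈ f.support, ‖coeff d f * ∏ i, x i ^ d i‖ :=
        norm_sum_le _ _
    _ ≤ ∑ d ∈ f.support, ‖coeff d f‖ * M ^ f.totalDegree := by
        refine Finset.sum_le_sum fun d hd => ?_
        rw [norm_mul]
        refine mul_le_mul_of_nonneg_left ?_ (norm_nonneg _)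
        calc ‖∏ i, x i ^ d i‖ = ∏ i, ‖x i‖ ^ d i := by
              rw [norm_prod]; simp [norm_pow]
          _ ≤ ∏ i, M ^ d i := by
              refine Finset.prod_le_prod (fun i _ => pow_nonneg (norm_nonneg _) _)
                (fun i _ => pow_le_pow_left₀ (norm_nonneg _) ?_ _)
              exact (abs_apply_le_eucNorm x i).trans (le_max_right _ _)
          _ = M ^ (∑ i, d i) := Finset.prod_pow_eq_pow_sum _ _ _
          _ ≤ M ^ f.totalDegree := by
              apply pow_le_pow_right₀ hM1
              have h2 : (∑ i, d i) = d.sum fun _ e => e := by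
                rw [Finsupp.sum]
                exact (Finset.sum_subset (Finset.subset_univ _) (by
                  intro i _ hi; simpa using Finsupp.notMem_support_iff.mp hi)).symm
              rw [h2]; exact le_totalDegree hd
    _ = (∑ d ∈ f.support, ‖coeff d f‖) * M ^ f.totalDegree := by
        rw [Finset.sum_mul]
    _ ≤ _ :=
        mul_le_mul_of_nonneg_right (le_max_right _ _) (pow_nonneg hM0 _)

set_option maxHeartbeats 2000000 in
/-- **The auxiliary functions `u_j` belong to `𝓛⁺(ℂ^m)`.** Suppose `p ∈ ℂ[x₁,…,x_m]` has
total degree `D ≥ 1`, and the common zero set of its leading homogeneous part `p̂` and of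
`x₂,…,x_m` consists only of the origin.  Then for each integer `j ≥ 1` the function
`u_j(x) = max{(1/D)log|p(x)|, log(|x₂|/j), …, log(|x_m|/j), −log j}` satisfies
`log⁺‖x‖ + c ≤ u_j(x) ≤ log⁺‖x‖ + C` on `ℂ^m` for some constants `c ≤ C`. -/
theorem stmt_11 (m : ℕ) (p : MvPolynomial (Fin m) ℂ) (D : ℕ) (hD : 1 ≤ D)
    (hdeg : p.totalDegree = D)
    (hzero : {x : Fin m → ℂ | eval x (homogeneousComponent D p) = 0 ∧
        ∀ i : Fin m, (i : ℕ) ≠ 0 → x i = 0} ⊆ {0})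
    (j : ℕ) (hj : 1 ≤ j) :
    ∃ c C : ℝ, c ≤ C ∧ ∀ x : Fin m → ℂ,
      logPlus (eucNorm x) + c ≤ uj m p D j x ∧
      uj m p D j x ≤ logPlus (eucNorm x) + C := by
  -- The case `m = 0` is impossible since then `p` is constant.
  rcases Nat.eq_zero_or_pos m with hm0 | hm
  · exfalso
    subst hm0
    have h0 : p.totalDegree ≤ 0 := by
      rw [totalDegree]
      apply Finset.sup_le
      intro d _
      have hd0 : d = 0 := Finsupp.ext fun i => i.elim0
      simp [hd0]
    omega
  have hD0 : (0:ℝ) < (D:ℝ) := by exact_mod_cast Nat.lt_of_lt_of_le Nat.zero_lt_one hD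
  have hj1 : (1:ℝ) ≤ (j:ℝ) := by exact_mod_cast hj
  have hj0 : (0:ℝ) < (j:ℝ) := lt_of_lt_of_le zero_lt_one hj1
  set P := homogeneousComponent D p with hP
  have hPhom : P.IsHomogeneous D := homogeneousComponent_isHomogeneous D p
  set q := p - P with hq
  obtain ⟨C₁, hC₁, hC₁b⟩ := eval_bound p
  obtain ⟨C₂, hC₂, hC₂b⟩ := eval_bound q
  have hqdeg : q.totalDegree ≤ D - 1 := tail_degree p hdeg hD
  have hqsplit : ∀ x : Fin m → ℂ, eval x p = eval x P + eval x q := by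
    intro x; rw [hq]; simp
  clear_value q
  clear hq
  -- minimum of `|P| + ∑|ωᵢ|` on the unit sphere
  set g : EuclideanSpace ℂ (Fin m) → ℝ := fun ω => ‖eval (ω : Fin m → ℂ) P‖ +
      ∑ i ∈ Finset.univ.filter (fun i : Fin m => (i:ℕ) ≠ 0), ‖ω i‖ with hg
  have hgnn : ∀ ω, 0 ≤ g ω := fun ω =>
    add_nonneg (norm_nonneg _) (Finset.sum_nonneg fun i _ => norm_nonneg _)
  have hc : IsCompact (Metric.sphere (0:EuclideanSpace ℂ (Fin m)) 1) := isCompact_sphere _ _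
  have hne : (Metric.sphere (0:EuclideanSpace ℂ (Fin m)) 1).Nonempty := by
    refine ⟨EuclideanSpace.single ⟨0, hm⟩ (1:ℂ), ?_⟩
    have h : ‖EuclideanSpace.single (𝕜 := ℂ) (⟨0, hm⟩ : Fin m) (1:ℂ)‖ = 1 := by
      rw [EuclideanSpace.norm_single]; norm_num
    exact mem_sphere_zero_iff_norm.mpr h
  have hcont : Continuous g := by
    rw [hg]
    apply Continuous.add
    · exact continuous_norm.comp
        ((MvPolynomial.continuous_eval (p := P)).comp (PiLp.continuous_ofLp 2 fun _ : Fin m => ℂ))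
    · apply continuous_finset_sum
      intro i _
      exact continuous_norm.comp
        ((continuous_apply i).comp (PiLp.continuous_ofLp 2 fun _ : Fin m => ℂ))
  obtain ⟨ω₀, hω₀s, hmin⟩ := hc.exists_isMinOn hne hcont.continuousOn
  have hδpos0 : 0 < g ω₀ := by
    rcases lt_or_eq_of_le (hgnn ω₀) with h | h
    · exact h
    exfalso
    have hgz : ‖eval (ω₀ : Fin m → ℂ) P‖ +
        ∑ i ∈ Finset.univ.filter (fun i : Fin m => (i:ℕ) ≠ 0), ‖ω₀ i‖ = 0 := by
      have h' := h.symm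
      simp only [hg] at h'
      exact h'
    have h1 : 0 ≤ ‖eval (ω₀ : Fin m → ℂ) P‖ := norm_nonneg _
    have h2 : 0 ≤ ∑ i ∈ Finset.univ.filter (fun i : Fin m => (i:ℕ) ≠ 0),
        ‖ω₀ i‖ := Finset.sum_nonneg fun i _ => norm_nonneg _
    have hsum0 : ∑ i ∈ Finset.univ.filter (fun i : Fin m => (i:ℕ) ≠ 0),
        ‖ω₀ i‖ = 0 := by linarith
    have habs0 : ‖eval (ω₀ : Fin m → ℂ) P‖ = 0 := by linarith
    have hmem : (ω₀ : Fin m → ℂ) ∈ {x : Fin m → ℂ | eval x P = 0 ∧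
        ∀ i : Fin m, (i : ℕ) ≠ 0 → x i = 0} := by
      constructor
      · exact norm_eq_zero.mp habs0
      · intro i hi
        have := (Finset.sum_eq_zero_iff_of_nonneg
          (fun i _ => norm_nonneg (ω₀ i))).mp hsum0 i
          (Finset.mem_filter.mpr ⟨Finset.mem_univ i, hi⟩)
        exact norm_eq_zero.mp this
    have h0 : (ω₀ : Fin m → ℂ) = 0 := hzero hmem
    have h1' : ‖ω₀‖ = 1 := mem_sphere_zero_iff_norm.mp hω₀s
    rw [show ω₀ = (0 : EuclideanSpace ℂ (Fin m)) from by simpa using congrArg (WithLp.toLp 2) h0] at h1'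
    simp at h1'
  set δ := g ω₀ with hδ
  clear_value δ
  have hδpos : 0 < δ := hδpos0
  clear hδpos0
  set δ₁ : ℝ := δ / 2 with hδ₁
  clear_value δ₁
  have hδ₁pos : 0 < δ₁ := by rw [hδ₁]; positivity
  have hm0' : (0:ℝ) < (m:ℝ) := by exact_mod_cast hm
  set δ₂ : ℝ := δ / (2 * m) with hδ₂
  clear_value δ₂
  have hδ₂pos : 0 < δ₂ := by rw [hδ₂]; positivity
  have hmδ₂ : (m:ℝ) * δ₂ = δ₁ := by
    rw [hδ₂, hδ₁]
    field_simp
  set R : ℝ := max 1 (2 * C₂ / δ₁) with hR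
  clear_value R
  have hR1 : (1:ℝ) ≤ R := by rw [hR]; exact le_max_left _ _
  have hRge : 2 * C₂ / δ₁ ≤ R := by rw [hR]; exact le_max_right _ _
  set Cbig : ℝ := (1 / (D:ℝ)) * Real.log C₁ with hCbig
  clear_value Cbig
  have hCbig0 : 0 ≤ Cbig := by
    rw [hCbig]; exact mul_nonneg (by positivity) (Real.log_nonneg hC₁)
  set c : ℝ := min (-(Real.log j) - Real.log R)
      (min ((1/(D:ℝ)) * Real.log (δ₁/2)) (Real.log δ₂ - Real.log j)) with hcdef
  clear_value c
  have hc1 : c ≤ -(Real.log j) - Real.log R := by rw [hcdef]; exact min_le_left _ _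
  have hc2 : c ≤ (1/(D:ℝ)) * Real.log (δ₁/2) := by
    rw [hcdef]; exact le_trans (min_le_right _ _) (min_le_left _ _)
  have hc3 : c ≤ Real.log δ₂ - Real.log j := by
    rw [hcdef]; exact le_trans (min_le_right _ _) (min_le_right _ _)
  clear hcdef
  have hcle0 : c ≤ 0 := by
    have h2 : 0 ≤ Real.log j := Real.log_nonneg hj1
    have h3 : 0 ≤ Real.log R := Real.log_nonneg hR1
    linarith
  refine ⟨c, Cbig, hcle0.trans hCbig0, fun x => ?_⟩
  set r := eucNorm x with hr
  have hr0 : 0 ≤ r := by rw [hr]; exact eucNorm_nonneg x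
  set S : Set ℝ := insert ((1 / (D : ℝ)) * Real.log (‖eval x p‖))
    (insert (-Real.log (j : ℝ))
      {t : ℝ | ∃ i : Fin m, (i : ℕ) ≠ 0 ∧ t = Real.log (‖x i‖ / (j : ℝ))}) with hS
  have hujS : uj m p D j x = sSup S := rfl
  have hSfin : S.Finite := by
    rw [hS]
    apply Set.Finite.insert
    apply Set.Finite.insert
    refine (Set.finite_range (fun i : Fin m =>
      Real.log (‖x i‖ / (j : ℝ)))).subset ?_
    rintro t ⟨i, _, rfl⟩
    exact ⟨i, rfl⟩
  have hSne : S.Nonempty := ⟨_, hS ▸ Set.mem_insert _ _⟩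
  have hbdd : BddAbove S := hSfin.bddAbove
  have hmem1 : (1 / (D : ℝ)) * Real.log (‖eval x p‖) ∈ S :=
    hS ▸ Set.mem_insert _ _
  have hmem2 : -Real.log (j:ℝ) ∈ S := hS ▸ Set.mem_insert_of_mem _ (Set.mem_insert _ _)
  have hmem3 : ∀ i : Fin m, (i:ℕ) ≠ 0 → Real.log (‖x i‖ / (j:ℝ)) ∈ S :=
    fun i hi => hS ▸ Set.mem_insert_of_mem _ (Set.mem_insert_of_mem _ ⟨i, hi, rfl⟩)
  clear_value S
  set M : ℝ := max 1 r with hM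
  clear_value M
  have hM1 : (1:ℝ) ≤ M := by rw [hM]; exact le_max_left _ _
  have hM0 : (0:ℝ) < M := lt_of_lt_of_le zero_lt_one hM1
  have hlogM : logPlus r = Real.log M := by rw [hM]; exact logPlus_eq_log_max hr0
  constructor
  · -- lower bound
    rcases le_or_gt r R with hrR | hrR
    · -- small `r`
      have h1 : logPlus r ≤ Real.log R := by
        rw [hlogM]
        exact Real.log_le_log hM0 (by rw [hM]; exact max_le hR1 hrR)
      have h2 := le_csSup hbdd hmem2
      rw [hujS]
      linarith
    · -- large `r`
      have hr1 : (1:ℝ) ≤ r := hR1.trans hrR.le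
      have hr0' : (0:ℝ) < r := lt_of_lt_of_le zero_lt_one hr1
      have hlogplus : logPlus r = Real.log r := by
        rw [logPlus]; exact max_eq_left (Real.log_nonneg hr1)
      set ω : Fin m → ℂ := ((r:ℂ)⁻¹) • x with hω
      have hrC : (r:ℂ) ≠ 0 := by exact_mod_cast hr0'.ne'
      have hxω : x = (r:ℂ) • ω := by
        rw [hω, smul_smul, mul_inv_cancel₀ hrC, one_smul]
      have hωnorm : eucNorm ω = 1 := by
        rw [hω, eucNorm_smul, norm_inv, Complex.norm_real, Real.norm_eq_abs, abs_of_pos hr0', ← hr,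
          inv_mul_cancel₀ hr0'.ne']
      clear_value ω
      clear hω
      obtain ⟨ωE, hωE⟩ : ∃ ωE : EuclideanSpace ℂ (Fin m), ωE = WithLp.toLp 2 ω := ⟨_, rfl⟩
      have hωs : ωE ∈ Metric.sphere (0:EuclideanSpace ℂ (Fin m)) 1 := by
        apply mem_sphere_zero_iff_norm.mpr
        rw [hωE, ← eucNorm_eq_norm]
        exact hωnorm
      have hgω : δ ≤ ‖eval ω P‖ +
          ∑ i ∈ Finset.univ.filter (fun i : Fin m => (i:ℕ) ≠ 0), ‖ω i‖ := by
        have h := hmin hωs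
        simp only [hg] at h
        rw [hωE] at h
        rw [hδ]
        exact h
      by_cases hcase : δ₁ ≤ ‖eval ω P‖
      · -- the polynomial term dominates
        have hPx : ‖eval x P‖ = r ^ D * ‖eval ω P‖ := by
          rw [hxω, homog_eval_smul hPhom, norm_mul, norm_pow, Complex.norm_real, Real.norm_eq_abs,
            abs_of_pos hr0']
        have hqx : ‖eval x q‖ ≤ C₂ * r ^ (D - 1) := by
          have h := hC₂b x
          rw [← hr, max_eq_right hr1] at h
          exact h.trans (mul_le_mul_of_nonneg_left (pow_le_pow_right₀ hr1 hqdeg)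
            (by linarith))
        have hpx : (δ₁/2) * r ^ D ≤ ‖eval x p‖ := by
          have harg : eval x P = eval x p + (- eval x q) := by rw [hqsplit x]; ring
          have h1 : ‖eval x P‖ - ‖eval x q‖ ≤
              ‖eval x p‖ := by
            have h2 : ‖eval x P‖ ≤
                ‖eval x p‖ + ‖eval x q‖ := by
              calc ‖eval x P‖
                  = ‖eval x p + (- eval x q)‖ := by rw [harg]
                _ ≤ ‖eval x p‖ + ‖- eval x q‖ :=
                    norm_add_le _ _
                _ = ‖eval x p‖ + ‖eval x q‖ := by
                    rw [norm_neg]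
            linarith
          have h3 : C₂ * r ^ (D - 1) ≤ (δ₁/2) * r ^ D := by
            have hrD : r ^ D = r * r ^ (D - 1) := by
              rw [← pow_succ']
              congr 1
              omega
            have h5 : 2 * C₂ ≤ δ₁ * r := by
              have h6 : 2 * C₂ / δ₁ ≤ r := hRge.trans hrR.le
              rw [div_le_iff₀ hδ₁pos] at h6
              linarith
            have hpow : (0:ℝ) ≤ r ^ (D - 1) := by positivity
            rw [hrD]
            nlinarith
          have h4 : δ₁ * r ^ D ≤ ‖eval x P‖ := by
            rw [hPx]
            have hpow : (0:ℝ) ≤ r ^ D := by positivity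
            nlinarith
          linarith
        have hlog : Real.log r + (1/(D:ℝ)) * Real.log (δ₁/2) ≤
            (1 / (D:ℝ)) * Real.log (‖eval x p‖) := by
          have hpos : (0:ℝ) < (δ₁/2) * r ^ D := by positivity
          have h6 := Real.log_le_log hpos hpx
          rw [Real.log_mul (by positivity) (by positivity), Real.log_pow] at h6
          have h7 := mul_le_mul_of_nonneg_left h6 (le_of_lt (by positivity : (0:ℝ) < 1/(D:ℝ)))
          have hkey : (1/(D:ℝ)) * (Real.log (δ₁/2) + (D:ℝ) * Real.log r) =
              (1/(D:ℝ)) * Real.log (δ₁/2) + Real.log r := by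
            field_simp
          rw [hkey] at h7
          linarith
        have h8 := le_csSup hbdd hmem1
        rw [hujS, hlogplus]
        linarith
      · -- some coordinate dominates
        push_neg at hcase
        have hsum : δ₁ ≤ ∑ i ∈ Finset.univ.filter (fun i : Fin m => (i:ℕ) ≠ 0),
            ‖ω i‖ := by
          rw [hδ₁]; linarith
        have hex : ∃ i ∈ Finset.univ.filter (fun i : Fin m => (i:ℕ) ≠ 0),
            δ₂ ≤ ‖ω i‖ := by
          by_contra hcon
          push_neg at hcon
          rcases Finset.eq_empty_or_nonempty
              (Finset.univ.filter (fun i : Fin m => (i:ℕ) ≠ 0)) with hemp | hnemp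
          · rw [hemp] at hsum
            simp at hsum
            linarith
          · have hlt : ∑ i ∈ Finset.univ.filter (fun i : Fin m => (i:ℕ) ≠ 0),
                ‖ω i‖ <
                ∑ _i ∈ Finset.univ.filter (fun i : Fin m => (i:ℕ) ≠ 0), δ₂ :=
              Finset.sum_lt_sum_of_nonempty hnemp fun i hi => hcon i hi
            rw [Finset.sum_const, nsmul_eq_mul] at hlt
            have hcard : ((Finset.univ.filter (fun i : Fin m => (i:ℕ) ≠ 0)).card : ℝ) ≤ m := by
              exact_mod_cast (Finset.card_filter_le _ _).trans (by simp)
            nlinarith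
        obtain ⟨i, hifil, hi⟩ := hex
        have hine : (i:ℕ) ≠ 0 := (Finset.mem_filter.mp hifil).2
        have hxi : ‖x i‖ = r * ‖ω i‖ := by
          rw [hxω]
          simp only [Pi.smul_apply, smul_eq_mul, norm_mul, Complex.norm_real, Real.norm_eq_abs]
          rw [abs_of_pos hr0']
        have hxipos : (0:ℝ) < ‖x i‖ := by
          rw [hxi]; nlinarith
        have hlog : Real.log r + (Real.log δ₂ - Real.log j) ≤
            Real.log (‖x i‖ / j) := by
          rw [Real.log_div (ne_of_gt hxipos) (ne_of_gt hj0)]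
          have h10 : δ₂ * r ≤ ‖x i‖ := by rw [hxi]; nlinarith
          have h11 := Real.log_le_log (by positivity) h10
          rw [Real.log_mul (ne_of_gt hδ₂pos) (ne_of_gt hr0')] at h11
          linarith
        have h12 := le_csSup hbdd (hmem3 i hine)
        rw [hujS, hlogplus]
        linarith
  · -- upper bound
    rw [hujS]
    apply csSup_le hSne
    intro t ht
    rw [hS] at ht
    simp only [Set.mem_insert_iff, Set.mem_setOf_eq] at ht
    rcases ht with rfl | rfl | ⟨i, _, rfl⟩
    · -- polynomial term
      have h := hC₁b x
      rw [← hr, hdeg, ← hM] at h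
      have h1le : (1:ℝ) ≤ C₁ * M ^ D := by
        have h0 : (1:ℝ) ≤ M ^ D := one_le_pow₀ hM1
        nlinarith
      have hlog : Real.log (‖eval x p‖) ≤ Real.log C₁ + (D:ℝ) * Real.log M := by
        have h2 : Real.log (C₁ * M ^ D) = Real.log C₁ + (D:ℝ) * Real.log M := by
          rw [Real.log_mul (by positivity) (by positivity), Real.log_pow]
        rw [← h2]
        exact log_le_log_max (norm_nonneg _) h h1le
      have h7 := mul_le_mul_of_nonneg_left hlog (le_of_lt (by positivity : (0:ℝ) < 1/(D:ℝ)))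
      have hkey : (1/(D:ℝ)) * (Real.log C₁ + (D:ℝ) * Real.log M) =
          Cbig + Real.log M := by
        rw [hCbig]; field_simp
      rw [hkey] at h7
      rw [hlogM]
      linarith
    · -- the constant term
      have h2 : 0 ≤ Real.log (j:ℝ) := Real.log_nonneg hj1
      have h3 : 0 ≤ logPlus r := le_max_right _ _
      linarith
    · -- coordinate terms
      have h4 : ‖x i‖ / (j:ℝ) ≤ M := by
        rw [hM]
        calc ‖x i‖ / (j:ℝ) ≤ ‖x i‖ :=
              div_le_self (norm_nonneg _) hj1
          _ ≤ r := by rw [hr]; exact abs_apply_le_eucNorm x i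
          _ ≤ max 1 r := le_max_right _ _
      have h5 : Real.log (‖x i‖ / (j:ℝ)) ≤ Real.log M :=
        log_le_log_max (by positivity) h4 hM1
      rw [hlogM]
      linarith
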